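/- For every bounded measurable function g : (E × (ℕ ∪ {∞}))^ℕ → ℝ and every n ≥ 1, almost surely on the event {κ_n = ∞} one has 𝔼[g(Y_n, κ̂_n, Y_{n+1}, κ̂_{n+1}, …) | 𝓕⁺_{n−1}] = 𝔼[g(Y_0, κ̂_0, Y_1, κ̂_1, …) | κ_0 = ∞]. -/

import Mathlib

open MeasureTheory ProbabilityTheory Set Filter

lemma renewal_aux {Ω : Type*} (m : MeasurableSpace Ω) {mΩ : MeasurableSpace Ω} (hm : m ≤ mΩ)
    (μ : Measure Ω) [IsProbabilityMeasure μ]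
    (A A₀ : Set Ω) (hA : MeasurableSet A) (hA₀ : MeasurableSet A₀)
    (f f₀ : Ω → ℝ) (hf_meas : Measurable f) (C : ℝ) (hfC : ∀ ω, |f ω| ≤ C)
    (hcond : μ[fun ω => f ω * A.indicator (fun _ => (1:ℝ)) ω | m]
        =ᵐ[μ] fun _ => ∫ ω, f₀ ω * A₀.indicator (fun _ => (1:ℝ)) ω ∂μ)
    (hcond1 : μ[fun ω => (1:ℝ) * A.indicator (fun _ => (1:ℝ)) ω | m]
        =ᵐ[μ] fun _ => ∫ ω, (1:ℝ) * A₀.indicator (fun _ => (1:ℝ)) ω ∂μ)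
    (h_iv : 0 < μ A₀) :
    ∀ᵐ ω ∂μ, ω ∈ A →
      (μ[f | m ⊔ MeasurableSpace.generateFrom {A}]) ω = ∫ ω', f₀ ω' ∂(μ[|A₀]) := by
  classical
  have hA𝓖 : MeasurableSet[m ⊔ MeasurableSpace.generateFrom {A}] A :=
    (le_sup_right : MeasurableSpace.generateFrom {A} ≤ m ⊔ MeasurableSpace.generateFrom {A}) A
      (MeasurableSpace.measurableSet_generateFrom (Set.mem_singleton A))
  have hm𝓖 : m ⊔ MeasurableSpace.generateFrom {A} ≤ mΩ := by
    refine sup_le hm (MeasurableSpace.generateFrom_le ?_)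
    rintro t ht
    rw [Set.mem_singleton_iff] at ht
    subst ht; exact hA
  haveI : SigmaFinite (μ.trim hm𝓖) := by
    have : IsFiniteMeasure (μ.trim hm𝓖) := isFiniteMeasure_trim hm𝓖
    infer_instance
  haveI : SigmaFinite (μ.trim hm) := by
    have : IsFiniteMeasure (μ.trim hm) := isFiniteMeasure_trim hm
    infer_instance
  set I : ℝ := ∫ ω, f₀ ω * A₀.indicator (fun _ => (1:ℝ)) ω ∂μ with hI_def
  set c : ℝ := ∫ ω', f₀ ω' ∂(μ[|A₀]) with hc_def
  have hIndf : (fun ω => f ω * A.indicator (fun _ => (1:ℝ)) ω) = A.indicator f := by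
    funext ω; by_cases h : ω ∈ A <;>
      simp [Set.indicator_of_mem, Set.indicator_of_notMem, h]
  have hInd1 : (fun ω => (1:ℝ) * A.indicator (fun _ => (1:ℝ)) ω)
      = A.indicator (fun _ => (1:ℝ)) := by
    funext ω; simp
  have hI : I = ∫ ω in A₀, f₀ ω ∂μ := by
    rw [hI_def, show (fun ω => f₀ ω * A₀.indicator (fun _ => (1:ℝ)) ω) = A₀.indicator f₀ by
      funext ω; by_cases h : ω ∈ A₀ <;>
        simp [Set.indicator_of_mem, Set.indicator_of_notMem, h]]
    exact integral_indicator hA₀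
  have hJ : ∫ ω, (1:ℝ) * A₀.indicator (fun _ => (1:ℝ)) ω ∂μ = (μ A₀).toReal := by
    rw [show (fun ω => (1:ℝ) * A₀.indicator (fun _ => (1:ℝ)) ω)
        = A₀.indicator (fun _ => (1:ℝ)) by funext ω; simp,
      integral_indicator hA₀, setIntegral_const, smul_eq_mul, mul_one, measureReal_def]
  have hc : c = (μ A₀).toReal⁻¹ * ∫ ω in A₀, f₀ ω ∂μ := by
    rw [hc_def, ProbabilityTheory.cond, integral_smul_measure, ENNReal.toReal_inv, smul_eq_mul]
  have hf_int : Integrable f μ := by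
    refine ⟨hf_meas.aestronglyMeasurable, ?_⟩
    refine HasFiniteIntegral.of_bounded (C := C) (Eventually.of_forall fun ω => ?_)
    simpa [Real.norm_eq_abs] using hfC ω
  have hfA_int : Integrable (A.indicator f) μ := hf_int.indicator hA
  have hcond' : μ[A.indicator f | m] =ᵐ[μ] fun _ => I := by rwa [hIndf] at hcond
  have hcond1' : μ[A.indicator (fun _ => (1:ℝ)) | m] =ᵐ[μ] fun _ => (μ A₀).toReal := by
    rw [← hJ, ← hInd1]; exact hcond1
  have h1A_int : Integrable (A.indicator fun _ => (1:ℝ)) μ := (integrable_const 1).indicator hA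
  have hBint : ∀ B : Set Ω, MeasurableSet[m] B →
      ∫ ω in B, A.indicator f ω ∂μ = (μ B).toReal * I := by
    intro B hB
    calc ∫ ω in B, A.indicator f ω ∂μ
        = ∫ ω in B, (μ[A.indicator f | m]) ω ∂μ := (setIntegral_condExp hm hfA_int hB).symm
      _ = ∫ _ω in B, I ∂μ := setIntegral_congr_ae (hm B hB) (hcond'.mono fun ω h _ => h)
      _ = (μ B).toReal * I := by rw [setIntegral_const, smul_eq_mul, measureReal_def]
  have hBint1 : ∀ B : Set Ω, MeasurableSet[m] B →
      (μ (B ∩ A)).toReal = (μ B).toReal * (μ A₀).toReal := by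
    intro B hB
    have h1 : ∫ ω in B, A.indicator (fun _ => (1:ℝ)) ω ∂μ = (μ B).toReal * (μ A₀).toReal := by
      calc ∫ ω in B, A.indicator (fun _ => (1:ℝ)) ω ∂μ
          = ∫ ω in B, (μ[A.indicator (fun _ => (1:ℝ)) | m]) ω ∂μ :=
            (setIntegral_condExp hm h1A_int hB).symm
        _ = ∫ _ω in B, (μ A₀).toReal ∂μ :=
            setIntegral_congr_ae (hm B hB) (hcond1'.mono fun ω h _ => h)
        _ = (μ B).toReal * (μ A₀).toReal := by rw [setIntegral_const, smul_eq_mul, measureReal_def]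
    rw [setIntegral_indicator hA, setIntegral_const, smul_eq_mul, mul_one] at h1
    exact h1
  have key : ∀ S : Set Ω, MeasurableSet[m ⊔ MeasurableSpace.generateFrom {A}] S →
      ∃ B, MeasurableSet[m] B ∧ S ∩ A = B ∩ A := by
    intro S hS
    let D : MeasurableSpace Ω :=
      { MeasurableSet' := fun S => ∃ B, MeasurableSet[m] B ∧ S ∩ A = B ∩ A
        measurableSet_empty := ⟨∅, @MeasurableSet.empty _ m, rfl⟩
        measurableSet_compl := by
          rintro S ⟨B, hB, hSB⟩
          refine ⟨Bᶜ, hB.compl, ?_⟩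
          ext ω
          constructor <;> rintro ⟨h1, h2⟩
          · refine ⟨fun hB' => h1 ?_, h2⟩
            have hmem : ω ∈ B ∩ A := ⟨hB', h2⟩
            rw [← hSB] at hmem; exact hmem.1
          · refine ⟨fun hS' => h1 ?_, h2⟩
            have hmem : ω ∈ S ∩ A := ⟨hS', h2⟩
            rw [hSB] at hmem; exact hmem.1
        measurableSet_iUnion := by
          intro s hs
          choose B hB hSB using hs
          exact ⟨⋃ i, B i, MeasurableSet.iUnion hB, by
            rw [Set.iUnion_inter, Set.iUnion_inter]; exact Set.iUnion_congr hSB⟩ }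
    have hle : m ⊔ MeasurableSpace.generateFrom {A} ≤ D := by
      refine sup_le (fun t ht => ⟨t, ht, rfl⟩) (MeasurableSpace.generateFrom_le ?_)
      rintro t ht
      rw [Set.mem_singleton_iff] at ht
      subst ht
      exact ⟨Set.univ, @MeasurableSet.univ _ m, by simp⟩
    exact hle S hS
  have hA₀pos : (μ A₀).toReal ≠ 0 :=
    ne_of_gt (ENNReal.toReal_pos (ne_of_gt h_iv) (measure_ne_top μ A₀))
  have h1 : A.indicator (fun _ => c) =ᵐ[μ] μ[A.indicator f | m ⊔ MeasurableSpace.generateFrom {A}] := by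
    refine ae_eq_condExp_of_forall_setIntegral_eq hm𝓖 hfA_int
      (fun s _ _ => ((integrable_const c).indicator hA).integrableOn) ?_ ?_
    · intro S hS _
      obtain ⟨B, hB, hSA⟩ := key S hS
      rw [setIntegral_indicator hA, setIntegral_const, smul_eq_mul, measureReal_def,
        setIntegral_indicator hA, hSA]
      have hr : ∫ ω in B ∩ A, f ω ∂μ = (μ B).toReal * I := by
        rw [← setIntegral_indicator hA]
        exact hBint B hB
      rw [hr, hBint1 B hB, hc, hI]
      field_simp
    · exact StronglyMeasurable.aestronglyMeasurable
        (stronglyMeasurable_const.indicator hA𝓖)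
  have h2 : μ[A.indicator f | m ⊔ MeasurableSpace.generateFrom {A}]
      =ᵐ[μ] A.indicator (μ[f | m ⊔ MeasurableSpace.generateFrom {A}]) :=
    condExp_indicator hf_int hA𝓖
  filter_upwards [h1.trans h2] with ω hω hmem
  have := hω
  rw [Set.indicator_of_mem hmem, Set.indicator_of_mem hmem] at this
  exact this.symm
/-- For every bounded measurable `g : (E × (ℕ ∪ {∞}))^ℕ → ℝ` and every `n ≥ 1`,
almost surely on the event `{κ n = ∞}` one has
`𝔼[g(Y_n, κ̂_n, Y_{n+1}, κ̂_{n+1}, …) | 𝓕⁺_{n−1}] = 𝔼[g(Y_0, κ̂_0, Y_1, κ̂_1, …) | κ_0 = ∞]`,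
where `𝓕⁺_{n−1}` is generated by `𝓕 (n−1)` together with the event `{κ ((n−1)+1) = ∞}`
and the right-hand side is the expectation under the conditional measure `ℙ(· | κ_0 = ∞)`. -/
theorem renewal_condexp_after_renewal
    {Ω E : Type*} {mΩ : MeasurableSpace Ω} [MeasurableSpace E]
    (μ : Measure Ω) [IsProbabilityMeasure μ]
    (ℱ : Filtration ℕ mΩ)
    (κ : ℕ → Ω → ℕ∞) (Y : ℕ → Ω → E)
    (hκ_stop : ∀ i n : ℕ, MeasurableSet[ℱ n] {ω | κ i ω ≤ (n : ℕ∞)})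
    (hY_adapted : ∀ n : ℕ, Measurable[ℱ n] (Y n))
    (h_i : ∀ (n : ℕ) (ω : Ω), (n : ℕ∞) ≤ κ n ω)
    (h_ii : ∀ (m n : ℕ) (ω : Ω), m < n → (n : ℕ∞) ≤ κ m ω → κ n ω ≤ κ m ω)
    (h_iii : ∀ g : (ℕ → E × ℕ∞) → ℝ, Measurable g → (∃ Cg : ℝ, ∀ x, |g x| ≤ Cg) →
      ∀ n : ℕ, 1 ≤ n →
      μ[fun ω => g (fun k => (Y (n + k) ω, κ (n + k) ω - ((n + k : ℕ) : ℕ∞)))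
            * ({ω' | κ n ω' = ⊤}.indicator (fun _ => (1 : ℝ)) ω) | ℱ (n - 1)]
        =ᵐ[μ] fun _ => ∫ ω, g (fun k => (Y k ω, κ k ω - ((k : ℕ) : ℕ∞)))
            * ({ω' | κ 0 ω' = ⊤}.indicator (fun _ => (1 : ℝ)) ω) ∂μ)
    (h_iv : 0 < μ {ω | κ 0 ω = ⊤})
    (g : (ℕ → E × ℕ∞) → ℝ) (hg : Measurable g) (hgb : ∃ Cg : ℝ, ∀ x, |g x| ≤ Cg)
    (n : ℕ) (hn : 1 ≤ n) :
    ∀ᵐ ω ∂μ, κ n ω = ⊤ →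
      (μ[fun ω' => g (fun k => (Y (n + k) ω', κ (n + k) ω' - ((n + k : ℕ) : ℕ∞))) |
          (ℱ (n - 1) : MeasurableSpace Ω) ⊔
            MeasurableSpace.generateFrom {{ω' | κ (n - 1 + 1) ω' = ⊤}}]) ω
        = ∫ ω', g (fun k => (Y k ω', κ k ω' - ((k : ℕ) : ℕ∞)))
            ∂(μ[|{ω' | κ 0 ω' = ⊤}]) := by
  classical
  rw [show n - 1 + 1 = n from Nat.sub_add_cancel hn]
  obtain ⟨C, hC⟩ := hgb
  -- measurability of κ i
  have hκle : ∀ i j : ℕ, MeasurableSet {ω | κ i ω ≤ (j : ℕ∞)} :=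
    fun i j => ℱ.le j _ (hκ_stop i j)
  have hκtop : ∀ i, MeasurableSet {ω | κ i ω = ⊤} := by
    intro i
    have heq : {ω | κ i ω = ⊤} = (⋃ j : ℕ, {ω | κ i ω ≤ (j : ℕ∞)})ᶜ := by
      ext ω
      simp only [Set.mem_setOf_eq, Set.mem_compl_iff, Set.mem_iUnion, not_exists]
      constructor
      · rintro h j; rw [h]; simp
      · intro h
        by_contra h'
        obtain ⟨j, hj⟩ := WithTop.ne_top_iff_exists.mp h'
        exact h j (hj ▸ le_refl _)
    rw [heq]
    exact (MeasurableSet.iUnion fun j => hκle i j).compl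
  have hκ_meas : ∀ i, Measurable (κ i) := by
    intro i
    apply measurable_to_countable'
    intro x
    cases x with
    | top =>
      have : κ i ⁻¹' {⊤} = {ω | κ i ω = ⊤} := rfl
      rw [this]; exact hκtop i
    | coe j =>
      induction j with
      | zero =>
        have : κ i ⁻¹' {((0 : ℕ) : ℕ∞)} = {ω | κ i ω ≤ ((0 : ℕ) : ℕ∞)} := by
          ext ω
          simp only [Set.mem_preimage, Set.mem_singleton_iff, Set.mem_setOf_eq, Nat.cast_zero,
            nonpos_iff_eq_zero]
        rw [this]; exact hκle i 0
      | succ j _ =>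
        have : κ i ⁻¹' {((j + 1 : ℕ) : ℕ∞)}
            = {ω | κ i ω ≤ ((j + 1 : ℕ) : ℕ∞)} \ {ω | κ i ω ≤ (j : ℕ∞)} := by
          ext ω
          simp only [Set.mem_preimage, Set.mem_singleton_iff, Set.mem_diff, Set.mem_setOf_eq]
          constructor
          · rintro h
            rw [h]
            refine ⟨le_refl _, ?_⟩
            rw [Nat.cast_le]; omega
          · rintro ⟨h1, h2⟩
            cases hx : κ i ω with
            | top =>
              rw [hx, top_le_iff] at h1
              exact absurd h1 (WithTop.natCast_ne_top _)
            | coe a =>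
              rw [hx] at h1 h2
              rw [Nat.cast_le] at h1
              rw [Nat.cast_le] at h2
              rw [Nat.cast_inj]
              omega
        rw [this]
        exact (hκle i (j+1)).diff (hκle i j)
  have hf_meas : Measurable fun ω' =>
      g (fun k => (Y (n + k) ω', κ (n + k) ω' - ((n + k : ℕ) : ℕ∞))) := by
    refine hg.comp (measurable_pi_lambda _ fun k => Measurable.prodMk ?_ ?_)
    · exact (hY_adapted (n + k)).mono (ℱ.le _) le_rfl
    · exact (measurable_of_countable (fun x : ℕ∞ => x - ((n + k : ℕ) : ℕ∞))).comp
        (hκ_meas (n + k))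
  exact renewal_aux (ℱ (n - 1)) (ℱ.le (n - 1)) μ
    {ω' | κ n ω' = ⊤} {ω' | κ 0 ω' = ⊤} (hκtop n) (hκtop 0)
    _ _ hf_meas C (fun ω => hC _)
    (h_iii g hg ⟨C, hC⟩ n hn)
    (h_iii (fun _ => (1:ℝ)) measurable_const ⟨1, fun x => by norm_num⟩ n hn)
    h_iv
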